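/- Let X be a Hausdorff topological space and F a sheaf of ℚ-modules on X. For every natural number k and every point x ∈ X \ X^(k), the stalk at x of the k-th term C^k(F) of the Godement resolution of F is zero: C^k(F)_x = 0. -/

import Mathlib

open CategoryTheory CategoryTheory.Limits TopCat TopologicalSpace Opposite

attribute [local instance] Classical.propDecidable
attribute [local instance] CategoryTheory.ConcreteCategory.instFunLike

noncomputable section

/-- The Cantor–Bendixson derivative of a set `A`: the set of points of `A` that are not
isolated in the subspace `A`, i.e. the points of `A` that are accumulation points of `A`. -/
def cbDeriv {X : Type*} [TopologicalSpace X] (A : Set X) : Set X :=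
  {x ∈ A | AccPt x (Filter.principal A)}

/-- The finite Cantor–Bendixson derivatives of the space: `cbIter X k = X^(k)`. -/
def cbIter (X : Type*) [TopologicalSpace X] (k : ℕ) : Set X :=
  cbDeriv^[k] Set.univ

/-- The abelian category of sheaves of `ℚ`-modules on the topological space `X`. -/
abbrev SheafQ (X : TopCat.{0}) : Type 1 :=
  Sheaf (Opens.grothendieckTopology X) (ModuleCat.{0} ℚ)

variable (X : TopCat.{0})

/-- The skyscraper sheaf `ι_x(M)` at the point `x` with value the `ℚ`-module `M`. -/
def skyQ (x : X) (M : ModuleCat.{0} ℚ) : SheafQ X := skyscraperSheaf x M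

/-- The stalk `F_x` of a sheaf of `ℚ`-modules at a point `x`. -/
def stalkAt (F : SheafQ X) (x : X) : ModuleCat.{0} ℚ := TopCat.Presheaf.stalk F.val x

/-- The zeroth term of the Godement resolution: `C^0(F) = ∏_{y ∈ X} ι_y(F_y)`, the product
of the skyscraper sheaves on the stalks of `F`. -/
def godC0 (F : SheafQ X) : SheafQ X := ∏ᶜ fun y : X => skyQ X y (stalkAt X F y)

/-- The canonical monomorphism `δ_0 : F ⟶ C^0(F)` sending a section to its family of germs;
its component at `y` is the unit of the adjunction (stalk at `y`) ⊣ (skyscraper at `y`). -/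
def godDelta0 (F : SheafQ X) : F ⟶ godC0 X F :=
  Limits.Pi.lift fun y : X => (stalkSkyscraperSheafAdjunction y).unit.app F

/-- The cokernel sequence of the Godement resolution: `godCoker F 0 = F` and
`godCoker F (k+1) = coker (δ : godCoker F k ⟶ C^0(godCoker F k))`, i.e. `coker δ_k`. -/
def godCoker (F : SheafQ X) : ℕ → SheafQ X
  | 0 => F
  | k + 1 => cokernel (godDelta0 X (godCoker F k))

/-- The `k`-th term of the Godement resolution of `F`: `C^k(F) = C^0(coker δ_{k-1})`. -/
def godC (F : SheafQ X) (k : ℕ) : SheafQ X := godC0 X (godCoker X F k)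


lemma eqToHom_comp_apply {M N P : ModuleCat.{0} ℚ} (h : M = N) (h' : N = P) (a : M) :
    eqToHom h' (eqToHom h a) = eqToHom (h.trans h') a := by subst h; subst h'; rfl

lemma subsingleton_of_isZero {M : ModuleCat.{0} ℚ} (h : IsZero M) : Subsingleton M := by
  have h1 : (𝟙 M : M ⟶ M) = 0 := h.eq_of_src _ _
  have key : ∀ a : M, a = 0 := fun a => by
    calc a = (𝟙 M : M ⟶ M) a := rfl
      _ = (0 : M ⟶ M) a := by rw [h1]
      _ = 0 := LinearMap.zero_apply a
  exact ⟨fun a b => by rw [key a, key b]⟩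

lemma skySectionsIsZero (y : X) (M : ModuleCat.{0} ℚ) (W : Opens X)
    (h : y ∈ W → IsZero M) : IsZero ((skyQ X y M).val.obj (op W)) := by
  show IsZero (if y ∈ W then M else terminal _)
  by_cases hy : y ∈ W
  · rw [if_pos hy]; exact h hy
  · rw [if_neg hy]
    exact (isZero_zero _).of_iso HasZeroObject.zeroIsoTerminal.symm

lemma godSectionExt (G : SheafQ X) (W : Opens X)
    (s t : (godC0 X G).val.obj (op W))
    (h : ∀ y : X, (Pi.π (fun y : X => skyQ X y (stalkAt X G y)) y).hom.app (op W) s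
        = (Pi.π (fun y : X => skyQ X y (stalkAt X G y)) y).hom.app (op W) t) : s = t := by
  let D := Discrete.functor fun y : X => skyQ X y (stalkAt X G y)
  let E : SheafQ X ⥤ ModuleCat.{0} ℚ :=
    sheafToPresheaf _ _ ⋙ (evaluation (Opens ↑X)ᵒᵖ (ModuleCat.{0} ℚ)).obj (op W)
  haveI : PreservesLimit D E := inferInstance
  exact Concrete.isLimit_ext (D ⋙ E) (isLimitOfPreserves E (limit.isLimit D)) s t
    (fun j => h j.as)

lemma stalkC0_isZero (G : SheafQ X) (x : X) (V : Opens X) (hxV : x ∈ V)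
    (h : ∀ y ∈ V, IsZero (stalkAt X G y)) : IsZero (stalkAt X (godC0 X G) x) := by
  have key : ∀ t : stalkAt X (godC0 X G) x, t = 0 := by
    intro t
    obtain ⟨U, hxU, s, rfl⟩ := TopCat.Presheaf.germ_exist (godC0 X G).val (x := x) t
    have hxW : x ∈ U ⊓ V := ⟨hxU, hxV⟩
    have hzero : (godC0 X G).val.map (homOfLE inf_le_left : U ⊓ V ⟶ U).op s = 0 := by
      apply godSectionExt
      intro y
      haveI := subsingleton_of_isZero (skySectionsIsZero X y (stalkAt X G y) (U ⊓ V)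
        (fun hy => h y hy.2))
      exact Subsingleton.elim _ _
    rw [← TopCat.Presheaf.germ_res_apply (godC0 X G).val
      (homOfLE inf_le_left : U ⊓ V ⟶ U) x hxW s]
    erw [hzero, map_zero]
    rfl
  haveI : Subsingleton (stalkAt X (godC0 X G) x) :=
    ⟨fun a b => by rw [key a, key b]⟩
  exact ModuleCat.isZero_of_subsingleton _

lemma isClosed_accSet {X : Type*} [TopologicalSpace X] [T1Space X] (A : Set X) :
    IsClosed {x | AccPt x (Filter.principal A)} := by
  rw [← isOpen_compl_iff, isOpen_iff_mem_nhds]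
  intro x hx
  simp only [Set.mem_compl_iff, Set.mem_setOf_eq, accPt_iff_nhds] at hx
  push_neg at hx
  obtain ⟨U, hU, hiso⟩ := hx
  obtain ⟨O, hOU, hOopen, hxO⟩ := mem_nhds_iff.mp hU
  refine Filter.mem_of_superset (hOopen.mem_nhds hxO) ?_
  intro z hz
  simp only [Set.mem_compl_iff, Set.mem_setOf_eq, accPt_iff_nhds]
  push_neg
  by_cases hzx : z = x
  · subst hzx; exact ⟨U, hU, hiso⟩
  · refine ⟨O \ {x}, Filter.inter_mem (hOopen.mem_nhds hz)
      (isOpen_compl_singleton.mem_nhds hzx), ?_⟩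
    rintro y ⟨⟨hyO, hyx⟩, hyA⟩
    exact absurd (hiso y ⟨hOU hyO, hyA⟩) hyx

lemma isClosed_cbIter {X : Type*} [TopologicalSpace X] [T1Space X] (k : ℕ) :
    IsClosed (cbIter X k) := by
  induction k with
  | zero => exact isClosed_univ
  | succ k ih =>
      rw [cbIter, Function.iterate_succ_apply']
      exact ih.inter (isClosed_accSet _)

lemma stalkCoker_isZero [T2Space X] (F : SheafQ X) :
    ∀ (k : ℕ) (x : X), x ∉ cbIter X k → IsZero (stalkAt X (godCoker X F k) x) := by
  intro k
  induction k with
  | zero => exact fun x hx => absurd (Set.mem_univ x) hx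
  | succ k ih =>
    intro x hx
    have hx' : x ∉ cbDeriv (cbIter X k) := by
      rwa [cbIter, Function.iterate_succ_apply'] at hx
    set G := godCoker X F k with hG
    let L : SheafQ X ⥤ ModuleCat.{0} ℚ :=
      Sheaf.forget (ModuleCat.{0} ℚ) X ⋙ TopCat.Presheaf.stalkFunctor (ModuleCat.{0} ℚ) x
    haveI : PreservesColimits L := (stalkSkyscraperSheafAdjunction x).leftAdjoint_preservesColimits
    haveI : L.IsLeftAdjoint := (stalkSkyscraperSheafAdjunction x).isLeftAdjoint
    suffices hepi : Epi (L.map (godDelta0 X G)) by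
      have iso : L.obj (cokernel (godDelta0 X G)) ≅ cokernel (L.map (godDelta0 X G)) :=
        PreservesCokernel.iso L _
      exact ((isZero_zero _).of_iso (cokernel.ofEpi _)).of_iso iso
    by_cases hxk : x ∈ cbIter X k
    · have hacc : ¬ AccPt x (Filter.principal (cbIter X k)) := fun ha => hx' ⟨hxk, ha⟩
      rw [accPt_iff_nhds] at hacc
      push_neg at hacc
      obtain ⟨U₀, hU₀, hisol⟩ := hacc
      obtain ⟨O, hOU₀, hOopen, hxO⟩ := mem_nhds_iff.mp hU₀
      rw [ModuleCat.epi_iff_surjective]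
      intro t
      obtain ⟨U, hxU, s, rfl⟩ := TopCat.Presheaf.germ_exist (godC0 X G).val (x := x) t
      set W₁ : Opens ↑X := U ⊓ ⟨O, hOopen⟩ with hW₁def
      have hxW₁ : x ∈ W₁ := ⟨hxU, hxO⟩
      set s₁ := (godC0 X G).val.map (homOfLE (inf_le_left : W₁ ≤ U)).op s with hs₁def
      set e := (Pi.π (fun y : ↑X => skyQ X y (stalkAt X G y)) x).hom.app (op W₁) s₁ with hedef
      have hpos₁ : ((skyQ X x (stalkAt X G x)).val.obj (op W₁)) = stalkAt X G x := if_pos hxW₁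
      set sx : stalkAt X G x := (eqToHom hpos₁) e with hsxdef
      obtain ⟨W₂, hxW₂, t₀, ht₀⟩ := TopCat.Presheaf.germ_exist G.val (x := x) sx
      set W : Opens ↑X := W₁ ⊓ W₂ with hWdef
      have hxW : x ∈ W := ⟨hxW₁, hxW₂⟩
      set tw := G.val.map (homOfLE (inf_le_right : W ≤ W₂)).op t₀ with htwdef
      refine ⟨TopCat.Presheaf.germ G.val W x hxW tw, ?_⟩
      have happ : L.map (godDelta0 X G) (TopCat.Presheaf.germ G.val W x hxW tw)
          = TopCat.Presheaf.germ (godC0 X G).val W x hxW ((godDelta0 X G).hom.app (op W) tw) :=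
        TopCat.Presheaf.stalkFunctor_map_germ_apply W x hxW (godDelta0 X G).hom tw
      rw [happ, ← TopCat.Presheaf.germ_res_apply (godC0 X G).val
        (homOfLE (le_trans inf_le_left inf_le_left) : W ⟶ U) x hxW s]
      refine congrArg _ ?_
      apply godSectionExt
      intro y
      by_cases hyx : y = x
      · subst hyx
        have hlift : godDelta0 X G ≫ Pi.π (fun z : ↑X => skyQ X z (stalkAt X G z)) y
            = (stalkSkyscraperSheafAdjunction y).unit.app G := Pi.lift_π _ _
        have hposW : ((skyQ X y (stalkAt X G y)).val.obj (op W)) = stalkAt X G y := if_pos hxW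
        have l1 : (Pi.π (fun z : ↑X => skyQ X z (stalkAt X G z)) y).hom.app (op W)
            ((godDelta0 X G).hom.app (op W) tw)
            = eqToHom hposW.symm (TopCat.Presheaf.germ G.val W y hxW tw) := by
          have h0 : (Pi.π (fun z : ↑X => skyQ X z (stalkAt X G z)) y).hom.app (op W)
              ((godDelta0 X G).hom.app (op W) tw)
              = ((godDelta0 X G ≫ Pi.π (fun z : ↑X => skyQ X z (stalkAt X G z)) y).hom.app
                (op W)) tw := rfl
          rw [h0, hlift]
          show ((StalkSkyscraperPresheafAdjunctionAuxs.toSkyscraperPresheaf y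
            (𝟙 (TopCat.Presheaf.stalk G.val y))).app (op W)) tw = _
          rw [StalkSkyscraperPresheafAdjunctionAuxs.toSkyscraperPresheaf_app]
          erw [dif_pos (show y ∈ unop (op W) from hxW)]
          rfl
        have l2 : TopCat.Presheaf.germ G.val W y hxW tw = sx :=
          (TopCat.Presheaf.germ_res_apply G.val (homOfLE (inf_le_right : W ≤ W₂))
            y hxW t₀).trans ht₀
        have hmap : (godC0 X G).val.map
              (homOfLE (le_trans inf_le_left inf_le_left : W ≤ U)).op s
            = (godC0 X G).val.map (homOfLE (inf_le_left : W ≤ W₁)).op s₁ := by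
          rw [hs₁def]
          have hsplit : (godC0 X G).val.map
                (homOfLE (le_trans inf_le_left inf_le_left : W ≤ U)).op
              = (godC0 X G).val.map (homOfLE (inf_le_left : W₁ ≤ U)).op
                ≫ (godC0 X G).val.map (homOfLE (inf_le_left : W ≤ W₁)).op := by
            rw [← Functor.map_comp, ← op_comp, homOfLE_comp]
          rw [hsplit]
          rfl
        have nat : (Pi.π (fun z : ↑X => skyQ X z (stalkAt X G z)) y).hom.app (op W)
              ((godC0 X G).val.map (homOfLE (inf_le_left : W ≤ W₁)).op s₁)
            = (skyQ X y (stalkAt X G y)).val.map (homOfLE (inf_le_left : W ≤ W₁)).op e := by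
          have hn := (Pi.π (fun z : ↑X => skyQ X z (stalkAt X G z)) y).hom.naturality
            (homOfLE (inf_le_left : W ≤ W₁)).op
          calc (Pi.π (fun z : ↑X => skyQ X z (stalkAt X G z)) y).hom.app (op W)
                ((godC0 X G).val.map (homOfLE (inf_le_left : W ≤ W₁)).op s₁)
              = ((godC0 X G).val.map (homOfLE (inf_le_left : W ≤ W₁)).op
                  ≫ (Pi.π (fun z : ↑X => skyQ X z (stalkAt X G z)) y).hom.app (op W)) s₁ := rfl
            _ = ((Pi.π (fun z : ↑X => skyQ X z (stalkAt X G z)) y).hom.app (op W₁)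
                  ≫ (skyQ X y (stalkAt X G y)).val.map
                    (homOfLE (inf_le_left : W ≤ W₁)).op) s₁ := ConcreteCategory.congr_hom hn s₁
            _ = (skyQ X y (stalkAt X G y)).val.map (homOfLE (inf_le_left : W ≤ W₁)).op e := rfl
        have hcast : ((skyQ X y (stalkAt X G y)).val.obj (op W₁))
            = ((skyQ X y (stalkAt X G y)).val.obj (op W)) := by
          show (if y ∈ W₁ then stalkAt X G y else terminal _)
              = (if y ∈ W then stalkAt X G y else terminal _)
          rw [if_pos hxW₁, if_pos hxW]
        have hskymap : (skyQ X y (stalkAt X G y)).val.map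
              (homOfLE (inf_le_left : W ≤ W₁)).op = eqToHom hcast := by
          show (skyscraperPresheaf y (stalkAt X G y)).map _ = _
          rw [skyscraperPresheaf_map, dif_pos hxW]
          rfl
        rw [l1, l2, hsxdef, eqToHom_comp_apply hpos₁ hposW.symm e]
        erw [hmap, nat, hskymap]
      · haveI := subsingleton_of_isZero (skySectionsIsZero X y (stalkAt X G y) W (fun hyW => by
          refine ih y (fun hyk => hyx (hisol y ⟨hOU₀ hyW.1.2, hyk⟩))))
        exact Subsingleton.elim _ _
    · have hV : IsZero (stalkAt X (godC0 X G) x) :=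
        stalkC0_isZero X G x ⟨(cbIter X k)ᶜ, (isClosed_cbIter k).isOpen_compl⟩ hxk
          (fun y hy => ih y hy)
      exact ⟨fun g h _ => hV.eq_of_src g h⟩

/-- For a Hausdorff space `X`, a sheaf `F` of `ℚ`-modules on `X`, a natural
number `k` and a point `x ∈ X \ X^(k)`, the stalk at `x` of the `k`-th term of the Godement
resolution of `F` vanishes: `C^k(F)_x = 0`. -/
theorem stmt3 [T2Space X] (F : SheafQ X) (k : ℕ) (x : X)
    (hx : x ∉ cbIter X k) :
    IsZero (stalkAt X (godC X F k) x) :=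
  stalkC0_isZero X (godCoker X F k) x ⟨(cbIter X k)ᶜ, (isClosed_cbIter k).isOpen_compl⟩ hx
    (fun y hy => stalkCoker_isZero X F k y hy)

end
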